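/- Let p₀ ∈ (0,1), let p_L < p₀ < p_U with [p_L, p_U] ⊂ (0,1), and let π₀ be a Borel probability measure on [0,1] with π₀({p : |p − p₀| < ε}) > 0 for all ε > 0. For each N ∈ ℕ let n_N, m_N, r_N be natural numbers with n_N + m_N + r_N = N, assume n_N/N → p₀ and r_N/N → 0, and for s ∈ {0,1,…,r_N} define the imputed complete-data likelihood L_{N,s}(p) = p^{n_N + s} (1−p)^{m_N + r_N − s} for p ∈ [0,1]. Then min_{0 ≤ s ≤ r_N} ( ∫_{(p_L, p_U)} L_{N,s} dπ₀ ) / ( ∫_{[0,1]} L_{N,s} dπ₀ ) → 1 as N → ∞. -/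

import Mathlib

open MeasureTheory Filter


private lemma pow_eq_exp (A B : ℕ) {q : ℝ} (h0 : 0 < q) (h1 : q < 1) :
    q ^ A * (1 - q) ^ B = Real.exp ((A:ℝ) * Real.log q + (B:ℝ) * Real.log (1 - q)) := by
  have h1q : 0 < 1 - q := by linarith
  rw [Real.exp_add, Real.exp_nat_mul, Real.exp_nat_mul, Real.exp_log h0, Real.exp_log h1q]

private lemma mono_up (A B : ℕ) {p x : ℝ} (hp : 0 < p) (hpx : p ≤ x) (hx1 : x < 1)
    (hc : (B:ℝ) * x ≤ (A:ℝ) * (1 - x)) :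
    p ^ A * (1 - p) ^ B ≤ x ^ A * (1 - x) ^ B := by
  have hx0 : 0 < x := lt_of_lt_of_le hp hpx
  have h1p : 0 < 1 - p := by linarith
  have h1x : 0 < 1 - x := by linarith
  have hlog1 : Real.log p - Real.log x ≤ (p - x) / x := by
    have h := Real.log_le_sub_one_of_pos (div_pos hp hx0)
    rw [Real.log_div (ne_of_gt hp) (ne_of_gt hx0)] at h
    have he : p / x - 1 = (p - x) / x := by field_simp
    linarith [he ▸ h]
  have hlog2 : Real.log (1 - p) - Real.log (1 - x) ≤ (x - p) / (1 - x) := by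
    have h := Real.log_le_sub_one_of_pos (div_pos h1p h1x)
    rw [Real.log_div (ne_of_gt h1p) (ne_of_gt h1x)] at h
    have he : (1 - p) / (1 - x) - 1 = (x - p) / (1 - x) := by field_simp; ring
    linarith [he ▸ h]
  have hsum : (A:ℝ) * ((p - x) / x) + (B:ℝ) * ((x - p) / (1 - x)) ≤ 0 := by
    rw [mul_div_assoc', mul_div_assoc', div_add_div _ _ (ne_of_gt hx0) (ne_of_gt h1x)]
    apply div_nonpos_of_nonpos_of_nonneg
    · nlinarith [sub_nonneg.mpr hpx]
    · positivity
  have hA : (0:ℝ) ≤ A := Nat.cast_nonneg A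
  have hB : (0:ℝ) ≤ B := Nat.cast_nonneg B
  have key : (A:ℝ) * Real.log p + (B:ℝ) * Real.log (1 - p) ≤
      (A:ℝ) * Real.log x + (B:ℝ) * Real.log (1 - x) := by
    nlinarith [mul_le_mul_of_nonneg_left hlog1 hA, mul_le_mul_of_nonneg_left hlog2 hB]
  rw [pow_eq_exp A B hp (lt_of_le_of_lt hpx hx1), pow_eq_exp A B hx0 hx1]
  exact Real.exp_le_exp.mpr key

private lemma mono_down (A B : ℕ) {x p : ℝ} (hx : 0 < x) (hxp : x ≤ p) (hp1 : p < 1)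
    (hc : (A:ℝ) * (1 - x) ≤ (B:ℝ) * x) :
    p ^ A * (1 - p) ^ B ≤ x ^ A * (1 - x) ^ B := by
  have h := mono_up B A (p := 1 - p) (x := 1 - x) (by linarith) (by linarith) (by linarith)
    (by rw [sub_sub_cancel]; linarith)
  rw [sub_sub_cancel, sub_sub_cancel] at h
  nlinarith [h]


private noncomputable def gf (p₀ : ℝ) : ℝ → ℝ :=
  fun p => p₀ * Real.log p + (1 - p₀) * Real.log (1 - p)

private lemma gibbs {p₀ : ℝ} (h0 : 0 < p₀) (h1 : p₀ < 1) {x : ℝ}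
    (hx0 : 0 < x) (hx1 : x < 1) (hne : x ≠ p₀) : gf p₀ x < gf p₀ p₀ := by
  have h1p : 0 < 1 - p₀ := by linarith
  have h1x : 0 < 1 - x := by linarith
  have key1 : Real.log x - Real.log p₀ ≤ x / p₀ - 1 := by
    have h := Real.log_le_sub_one_of_pos (div_pos hx0 h0)
    rwa [Real.log_div (ne_of_gt hx0) (ne_of_gt h0)] at h
  have key2 : Real.log (1 - x) - Real.log (1 - p₀) < (1 - x) / (1 - p₀) - 1 := by
    have h := Real.log_lt_sub_one_of_pos (div_pos h1x h1p)
      (by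
        intro hcon
        apply hne
        field_simp at hcon
        linarith)
    rwa [Real.log_div (ne_of_gt h1x) (ne_of_gt h1p)] at h
  have e1 : p₀ * (x / p₀ - 1) = x - p₀ := by field_simp
  have e2 : (1 - p₀) * ((1 - x) / (1 - p₀) - 1) = p₀ - x := by field_simp; ring
  have m1 : p₀ * (Real.log x - Real.log p₀) ≤ x - p₀ := by
    calc p₀ * (Real.log x - Real.log p₀) ≤ p₀ * (x / p₀ - 1) :=
          mul_le_mul_of_nonneg_left key1 (le_of_lt h0)
      _ = x - p₀ := e1
  have m2 : (1 - p₀) * (Real.log (1 - x) - Real.log (1 - p₀)) < p₀ - x := by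
    calc (1 - p₀) * (Real.log (1 - x) - Real.log (1 - p₀))
        < (1 - p₀) * ((1 - x) / (1 - p₀) - 1) := by
          exact (mul_lt_mul_iff_right₀ h1p).mpr key2
      _ = p₀ - x := e2
  simp only [gf]
  nlinarith [m1, m2]

private lemma F_bound {p₀ pL pU δ : ℝ} (hpL : 0 < pL) (hpU : pU < 1)
    (hLp₀ : pL < p₀) (hp₀U : p₀ < pU) (hδ0 : 0 < δ)
    (hgy1 : max (gf p₀ pL) (gf p₀ pU) < gf p₀ (p₀ - δ))
    (hgy2 : max (gf p₀ pL) (gf p₀ pU) < gf p₀ (p₀ + δ)) :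
    ∃ ρ c : ℝ, 0 < ρ ∧ 0 < c ∧ ρ ≤ p₀ - pL ∧ ρ ≤ pU - p₀ ∧
      ∀ a x y : ℝ, |a - p₀| ≤ ρ → (x = pL ∨ x = pU) → (y = p₀ - δ ∨ y = p₀ + δ) →
        a * Real.log x + (1 - a) * Real.log (1 - x) ≤
          a * Real.log y + (1 - a) * Real.log (1 - y) - c := by
  set y₁ := p₀ - δ
  set y₂ := p₀ + δ
  set c₁ : ℝ := min (gf p₀ y₁) (gf p₀ y₂) - max (gf p₀ pL) (gf p₀ pU) with hc₁def
  have hc₁ : 0 < c₁ := by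
    have := lt_min hgy1 hgy2
    simp only [hc₁def]
    linarith [lt_min hgy1 hgy2]
  set Kf : ℝ → ℝ → ℝ := fun x y =>
    (Real.log x - Real.log (1 - x)) - (Real.log y - Real.log (1 - y)) with hKf
  set Kb : ℝ := max (max |Kf pL y₁| |Kf pL y₂|) (max |Kf pU y₁| |Kf pU y₂|) with hKb
  have hKb0 : 0 ≤ Kb := le_trans (abs_nonneg _) (le_max_of_le_left (le_max_left _ _))
  refine ⟨min (c₁ / (2 * (Kb + 1))) (min (p₀ - pL) (pU - p₀)), c₁ / 2,
    lt_min (by positivity) (lt_min (by linarith) (by linarith)), by positivity,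
    le_trans (min_le_right _ _) (min_le_left _ _),
    le_trans (min_le_right _ _) (min_le_right _ _), ?_⟩
  intro a x y ha hx hy
  have hdecomp : (a * Real.log x + (1 - a) * Real.log (1 - x)) -
      (a * Real.log y + (1 - a) * Real.log (1 - y)) =
      (gf p₀ x - gf p₀ y) + (a - p₀) * Kf x y := by
    simp only [gf, hKf]; ring
  have hgx : gf p₀ x ≤ max (gf p₀ pL) (gf p₀ pU) := by
    rcases hx with h | h <;> rw [h]
    · exact le_max_left _ _
    · exact le_max_right _ _
  have hgy : min (gf p₀ y₁) (gf p₀ y₂) ≤ gf p₀ y := by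
    rcases hy with h | h <;> rw [h]
    · exact min_le_left _ _
    · exact min_le_right _ _
  have hK : |Kf x y| ≤ Kb := by
    rcases hx with h1 | h1 <;> rcases hy with h2 | h2 <;> rw [h1, h2]
    · exact le_trans (le_max_left _ _) (le_max_left _ _)
    · exact le_trans (le_max_right _ _) (le_max_left _ _)
    · exact le_trans (le_max_left _ _) (le_max_right _ _)
    · exact le_trans (le_max_right _ _) (le_max_right _ _)
  have habs : |(a - p₀) * Kf x y| ≤ c₁ / 2 := by
    rw [abs_mul]
    calc |a - p₀| * |Kf x y| ≤ (c₁ / (2 * (Kb + 1))) * (Kb + 1) := by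
          apply mul_le_mul (le_trans ha (min_le_left _ _)) (by linarith) (abs_nonneg _)
            (by positivity)
      _ = c₁ / 2 := by field_simp
  have h2 := (abs_le.mp habs).2
  linarith [hdecomp ▸ (by linarith [h2, hgx, hgy] :
    (gf p₀ x - gf p₀ y) + (a - p₀) * Kf x y ≤ -(c₁/2))]

private lemma choose_delta {p₀ pL pU : ℝ} (hp₀0 : 0 < p₀) (hp₀1 : p₀ < 1)
    (hpL : 0 < pL) (hpU : pU < 1) (hLp₀ : pL < p₀) (hp₀U : p₀ < pU) :
    ∃ δ : ℝ, 0 < δ ∧ δ < p₀ - pL ∧ δ < pU - p₀ ∧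
      max (gf p₀ pL) (gf p₀ pU) < gf p₀ (p₀ - δ) ∧
      max (gf p₀ pL) (gf p₀ pU) < gf p₀ (p₀ + δ) := by
  have hM : max (gf p₀ pL) (gf p₀ pU) < gf p₀ p₀ :=
    max_lt (gibbs hp₀0 hp₀1 hpL (by linarith) (ne_of_lt hLp₀))
      (gibbs hp₀0 hp₀1 (by linarith) hpU (ne_of_gt hp₀U))
  have hcont : ContinuousAt (gf p₀) p₀ := by
    apply ContinuousAt.add
    · exact continuousAt_const.mul (Real.continuousAt_log (ne_of_gt hp₀0))
    · exact continuousAt_const.mul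
        ((Real.continuousAt_log (by intro h; linarith [sub_eq_zero.mp h] : (1:ℝ) - p₀ ≠ 0)).comp
          ((continuous_const.sub continuous_id).continuousAt))
  have hev : ∀ᶠ q in nhds p₀, max (gf p₀ pL) (gf p₀ pU) < gf p₀ q :=
    hcont.eventually_const_lt hM
  obtain ⟨ε, hε0, hball⟩ := Metric.eventually_nhds_iff.mp hev
  set δ := min (ε / 2) (min (p₀ - pL) (pU - p₀)) / 2 with hδdef
  have hδ0 : 0 < δ := by
    have h0 : 0 < min (ε / 2) (min (p₀ - pL) (pU - p₀)) :=
      lt_min (by linarith) (lt_min (by linarith) (by linarith))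
    simp only [hδdef]; linarith
  have h1 : δ ≤ ε / 4 := by
    have := min_le_left (ε / 2) (min (p₀ - pL) (pU - p₀))
    simp only [hδdef]; linarith
  have h2 : δ ≤ (p₀ - pL) / 2 := by
    have := le_trans (min_le_right (ε / 2) (min (p₀ - pL) (pU - p₀))) (min_le_left _ _)
    simp only [hδdef]; linarith
  have h3 : δ ≤ (pU - p₀) / 2 := by
    have := le_trans (min_le_right (ε / 2) (min (p₀ - pL) (pU - p₀))) (min_le_right _ _)
    simp only [hδdef]; linarith
  refine ⟨δ, hδ0, by linarith, by linarith, ?_, ?_⟩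
  · apply hball
    rw [Real.dist_eq, show p₀ - δ - p₀ = -δ by ring, abs_neg, abs_of_pos hδ0]
    linarith
  · apply hball
    rw [Real.dist_eq, show p₀ + δ - p₀ = δ by ring, abs_of_pos hδ0]
    linarith

set_option maxHeartbeats 1000000 in
private lemma per_s (π₀ : Measure ℝ) [IsProbabilityMeasure π₀]
    {pL pU y₁ y₂ a E : ℝ} (A B : ℕ) (Nr : ℝ)
    (hpL : 0 < pL) (hy₁L : pL < y₁) (hy₁₂ : y₁ < y₂) (hy₂U : y₂ < pU) (hpU : pU < 1)
    (hNr : 0 < Nr) (hABN : (A:ℝ) + B = Nr) (ha : a = A / Nr)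
    (hapL : pL ≤ a) (hapU : a ≤ pU)
    (hA1 : 1 ≤ A) (hB1 : 1 ≤ B) (hE : 0 < E)
    (hc₀ : 0 < (π₀ (Set.Ioo y₁ y₂)).toReal)
    (hXY : ∀ x y : ℝ, (x = pL ∨ x = pU) → (y = y₁ ∨ y = y₂) →
      x ^ A * (1 - x) ^ B ≤ E * (y ^ A * (1 - y) ^ B)) :
    1 - E / (π₀ (Set.Ioo y₁ y₂)).toReal ≤
      (∫ p in Set.Ioo pL pU, p ^ A * (1 - p) ^ B ∂π₀) /
        (∫ p in Set.Icc (0:ℝ) 1, p ^ A * (1 - p) ^ B ∂π₀) ∧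
      (∫ p in Set.Ioo pL pU, p ^ A * (1 - p) ^ B ∂π₀) /
        (∫ p in Set.Icc (0:ℝ) 1, p ^ A * (1 - p) ^ B ∂π₀) ≤ 1 := by
  set c₀ := (π₀ (Set.Ioo y₁ y₂)).toReal with hc₀def
  have hy₁0 : 0 < y₁ := lt_trans hpL hy₁L
  have hy₂1 : y₂ < 1 := lt_trans hy₂U hpU
  have hAa : (A:ℝ) = a * Nr := by rw [ha]; field_simp
  have hBa : (B:ℝ) = (1 - a) * Nr := by
    have : (B:ℝ) = Nr - A := by linarith
    rw [this, hAa]; ring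
  set F : ℝ → ℝ := fun p => p ^ A * (1 - p) ^ B with hFdef
  have hcont : Continuous F := by
    apply Continuous.mul (continuous_pow A)
    exact (continuous_const.sub continuous_id).pow B
  have hInt : IntegrableOn F (Set.Icc (0:ℝ) 1) π₀ :=
    hcont.continuousOn.integrableOn_compact isCompact_Icc
  have hsub1 : Set.Ioo pL pU ⊆ Set.Icc (0:ℝ) 1 := fun p hp =>
    ⟨le_of_lt (lt_trans hpL hp.1), le_of_lt (lt_trans hp.2 hpU)⟩
  have hsub2 : Set.Ioo y₁ y₂ ⊆ Set.Ioo pL pU := fun p hp =>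
    ⟨lt_trans hy₁L hp.1, lt_trans hp.2 hy₂U⟩
  have hFnn : ∀ p ∈ Set.Icc (0:ℝ) 1, 0 ≤ F p := by
    intro p hp
    exact mul_nonneg (pow_nonneg hp.1 _) (pow_nonneg (by linarith [hp.2]) _)
  set m' : ℝ := min (F y₁) (F y₂) with hm'def
  have hm' : 0 < m' := by
    apply lt_min
    · exact mul_pos (pow_pos hy₁0 _) (pow_pos (by linarith [lt_trans hy₁₂ hy₂1]) _)
    · exact mul_pos (pow_pos (lt_trans hy₁0 hy₁₂) _) (pow_pos (by linarith) _)
  -- pointwise bound on the good interval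
  have hgoodpt : ∀ p ∈ Set.Ioo y₁ y₂, m' ≤ F p := by
    intro p hp
    have hp0 : 0 < p := lt_trans hy₁0 hp.1
    have hp1 : p < 1 := lt_trans hp.2 hy₂1
    rcases le_total p a with hpa | hap
    · refine le_trans (min_le_left _ _) ?_
      exact mono_up A B hy₁0 (le_of_lt hp.1) hp1 (by rw [hAa, hBa]; nlinarith)
    · refine le_trans (min_le_right _ _) ?_
      exact mono_down A B hp0 (le_of_lt hp.2) hy₂1 (by rw [hAa, hBa]; nlinarith)
  -- pointwise bound on the bad set
  have hXle : ∀ x : ℝ, (x = pL ∨ x = pU) → F x ≤ E * m' := by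
    intro x hx
    rcases le_total (F y₁) (F y₂) with h | h
    · rw [hm'def, min_eq_left h]; exact hXY x y₁ hx (Or.inl rfl)
    · rw [hm'def, min_eq_right h]; exact hXY x y₂ hx (Or.inr rfl)
  have hLp₀' : pL < pU := lt_trans hy₁L (lt_trans hy₁₂ hy₂U)
  have hpU' : pU < 1 := hpU
  have hbadpt : ∀ p ∈ Set.Icc (0:ℝ) 1 \ Set.Ioo pL pU, F p ≤ E * m' := by
    rintro p ⟨⟨hp0, hp1⟩, hpnot⟩
    rw [Set.mem_Ioo, not_and_or, not_lt, not_lt] at hpnot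
    rcases hpnot with hple | hpge
    · rcases eq_or_lt_of_le hp0 with h0 | h0
      · have : F p = 0 := by
          rw [hFdef]; simp [← h0, zero_pow (by omega : A ≠ 0)]
        rw [this]; positivity
      · refine le_trans ?_ (hXle pL (Or.inl rfl))
        exact mono_up A B h0 hple (lt_trans hLp₀' hpU')
          (by rw [hAa, hBa]; nlinarith)
    · rcases eq_or_lt_of_le hp1 with h1 | h1
      · have : F p = 0 := by
          rw [hFdef]; simp [h1, zero_pow (by omega : B ≠ 0)]
        rw [this]; positivity
      · refine le_trans ?_ (hXle pU (Or.inr rfl))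
        exact mono_down A B (lt_trans hpL (lt_trans hy₁L (lt_trans hy₁₂ hy₂U))) hpge h1
          (by rw [hAa, hBa]; nlinarith)
  -- integrals
  have hIntGood : IntegrableOn F (Set.Ioo pL pU) π₀ := hInt.mono_set hsub1
  have hIntBad : IntegrableOn F (Set.Icc (0:ℝ) 1 \ Set.Ioo pL pU) π₀ :=
    hInt.mono_set Set.diff_subset
  set Ig := ∫ p in Set.Ioo pL pU, F p ∂π₀ with hIgdef
  set Ib := ∫ p in Set.Icc (0:ℝ) 1 \ Set.Ioo pL pU, F p ∂π₀ with hIbdef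
  have hsplit : ∫ p in Set.Icc (0:ℝ) 1, F p ∂π₀ = Ig + Ib := by
    rw [← Set.union_diff_cancel hsub1,
      setIntegral_union Set.disjoint_sdiff_right (measurableSet_Icc.diff measurableSet_Ioo)
        hIntGood hIntBad]
  have hc₀m : c₀ * m' ≤ Ig := by
    have h1 : ∫ _ in Set.Ioo y₁ y₂, m' ∂π₀ ≤ ∫ p in Set.Ioo y₁ y₂, F p ∂π₀ :=
      setIntegral_mono_on (integrableOn_const (measure_lt_top _ _).ne)
        (hInt.mono_set (fun p hp => hsub1 (hsub2 hp))) measurableSet_Ioo hgoodpt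
    rw [setIntegral_const, smul_eq_mul] at h1
    refine le_trans (le_of_eq (by rw [hc₀def]; rfl)) (le_trans h1 ?_)
    refine setIntegral_mono_set hIntGood ?_ (HasSubset.Subset.eventuallyLE hsub2)
    exact (ae_restrict_iff' measurableSet_Ioo).mpr (ae_of_all _ fun p hp => hFnn p (hsub1 hp))
  have hIb_ub : Ib ≤ E * m' := by
    have h1 : Ib ≤ ∫ _ in Set.Icc (0:ℝ) 1 \ Set.Ioo pL pU, E * m' ∂π₀ :=
      setIntegral_mono_on hIntBad (integrableOn_const (measure_lt_top _ _).ne)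
        (measurableSet_Icc.diff measurableSet_Ioo) hbadpt
    rw [setIntegral_const, smul_eq_mul] at h1
    refine le_trans h1 ?_
    have h2 : (π₀ (Set.Icc (0:ℝ) 1 \ Set.Ioo pL pU)).toReal ≤ 1 := by
      have h3 : π₀ (Set.Icc (0:ℝ) 1 \ Set.Ioo pL pU) ≤ 1 := prob_le_one
      simpa using ENNReal.toReal_mono ENNReal.one_ne_top h3
    rw [measureReal_def]
    nlinarith [mul_pos hE hm']
  have hIb0 : 0 ≤ Ib :=
    setIntegral_nonneg (measurableSet_Icc.diff measurableSet_Ioo) (fun p hp => hFnn p hp.1)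
  have hIg0 : 0 < Ig := lt_of_lt_of_le (mul_pos hc₀ hm') hc₀m
  rw [hsplit]
  constructor
  · rw [le_div_iff₀ (by linarith)]
    have hkey : c₀ * Ib ≤ E * Ig := by
      calc c₀ * Ib ≤ c₀ * (E * m') := mul_le_mul_of_nonneg_left hIb_ub (le_of_lt hc₀)
        _ = E * (c₀ * m') := by ring
        _ ≤ E * Ig := mul_le_mul_of_nonneg_left hc₀m (le_of_lt hE)
    have hIb2 : Ib ≤ E / c₀ * Ig := by
      rw [div_mul_eq_mul_div, le_div_iff₀ hc₀]; linarith [hkey]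
    have h4 : E / c₀ * Ig ≤ E / c₀ * (Ig + Ib) :=
      mul_le_mul_of_nonneg_left (by linarith) (by positivity)
    have expand : (1 - E / c₀) * (Ig + Ib) = Ig + Ib - E / c₀ * (Ig + Ib) := by ring
    rw [expand]; linarith
  · rw [div_le_one (by linarith)]; linarith

set_option maxHeartbeats 1000000 in
/-- Deterministic core of Lemma 5.2: the posterior probability of the interval
(p_L, p_U) around the true toxicity probability p₀ under the imputed
complete-data likelihoods L_{N,s}(p) = p^{n_N+s}(1−p)^{m_N+r_N−s} converges to 1
uniformly over all imputations s ∈ {0,…,r_N}. -/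
theorem stmt_16 (p₀ pL pU : ℝ) (hp₀ : p₀ ∈ Set.Ioo (0:ℝ) 1)
    (hpL : 0 < pL) (hpU : pU < 1) (hLp₀ : pL < p₀) (hp₀U : p₀ < pU)
    (π₀ : Measure ℝ) [IsProbabilityMeasure π₀]
    (hπ₀_supp : π₀ (Set.Icc (0:ℝ) 1)ᶜ = 0)
    (hπ₀_pos : ∀ ε > 0, 0 < π₀ {p : ℝ | |p - p₀| < ε})
    (n m r : ℕ → ℕ) (hsum : ∀ N, n N + m N + r N = N)
    (hn : Tendsto (fun N => (n N : ℝ) / N) atTop (nhds p₀))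
    (hr : Tendsto (fun N => (r N : ℝ) / N) atTop (nhds 0))
    (L : ℕ → ℕ → ℝ → ℝ)
    (hL : ∀ N s p, L N s p = p ^ (n N + s) * (1 - p) ^ (m N + r N - s)) :
    Tendsto (fun N =>
        (Finset.range (r N + 1)).inf' Finset.nonempty_range_add_one
          (fun s =>
            (∫ p in Set.Ioo pL pU, L N s p ∂π₀) /
              (∫ p in Set.Icc (0:ℝ) 1, L N s p ∂π₀)))
      atTop (nhds 1) := by
  obtain ⟨hp₀0, hp₀1⟩ := hp₀
  obtain ⟨δ, hδ0, hδL, hδU, hgy1, hgy2⟩ := choose_delta hp₀0 hp₀1 hpL hpU hLp₀ hp₀U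
  obtain ⟨ρ, c, hρ0, hc0, hρL, hρU, hF⟩ := F_bound hpL hpU hLp₀ hp₀U hδ0 hgy1 hgy2
  set c₀ := (π₀ (Set.Ioo (p₀ - δ) (p₀ + δ))).toReal with hc₀def
  have hc₀ : 0 < c₀ := by
    have hball : {p : ℝ | |p - p₀| < δ} = Set.Ioo (p₀ - δ) (p₀ + δ) := by
      ext p
      rw [Set.mem_setOf_eq, abs_sub_lt_iff, Set.mem_Ioo]
      constructor <;> rintro ⟨h1, h2⟩ <;> constructor <;> linarith
    have hpos := hπ₀_pos δ hδ0
    rw [hball] at hpos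
    exact ENNReal.toReal_pos (ne_of_gt hpos) (measure_ne_top _ _)
  -- lower bound sequence tends to 1
  have h_lb : Tendsto (fun N : ℕ => 1 - Real.exp (-c * N) / c₀) atTop (nhds 1) := by
    have h1 : Tendsto (fun N : ℕ => c * (N : ℝ)) atTop atTop :=
      Tendsto.const_mul_atTop hc0 tendsto_natCast_atTop_atTop
    have h2 : Tendsto (fun N : ℕ => Real.exp (-c * N)) atTop (nhds 0) := by
      have h3 := Real.tendsto_exp_atBot.comp (tendsto_neg_atTop_atBot.comp h1)
      simpa [Function.comp_def, neg_mul] using h3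
    have h4 : Tendsto (fun N : ℕ => 1 - Real.exp (-c * N) / c₀) atTop (nhds (1 - 0 / c₀)) :=
      tendsto_const_nhds.sub (h2.div_const c₀)
    simpa using h4
  -- the key eventual bound
  have hmain : ∀ᶠ N in atTop, ∀ s ∈ Finset.range (r N + 1),
      1 - Real.exp (-c * N) / c₀ ≤
        (∫ p in Set.Ioo pL pU, L N s p ∂π₀) /
          (∫ p in Set.Icc (0:ℝ) 1, L N s p ∂π₀) ∧
      (∫ p in Set.Ioo pL pU, L N s p ∂π₀) /
          (∫ p in Set.Icc (0:ℝ) 1, L N s p ∂π₀) ≤ 1 := by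
    set ε₂ := min (min (ρ / 2) ((1 - p₀) / 4)) (p₀ / 2) with hε₂def
    have hε₂0 : 0 < ε₂ :=
      lt_min (lt_min (by linarith) (by linarith)) (by linarith)
    have hε₂ρ : ε₂ ≤ ρ / 2 := le_trans (min_le_left _ _) (min_le_left _ _)
    have hε₂p : ε₂ ≤ (1 - p₀) / 4 := le_trans (min_le_left _ _) (min_le_right _ _)
    have hε₂p₀ : ε₂ ≤ p₀ / 2 := min_le_right _ _
    have hevn := Metric.tendsto_nhds.mp hn ε₂ hε₂0
    have hevr := Metric.tendsto_nhds.mp hr ε₂ hε₂0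
    filter_upwards [hevn, hevr, eventually_ge_atTop 1] with N h1 h2 hN1
    rw [Real.dist_eq] at h1 h2
    rw [sub_zero] at h2
    have hN0 : (0:ℝ) < N := by exact_mod_cast Nat.lt_of_lt_of_le Nat.zero_lt_one hN1
    have hrN : (r N : ℝ) / N < ε₂ := lt_of_abs_lt h2
    have hrNn : (0:ℝ) ≤ (r N : ℝ) / N := by positivity
    obtain ⟨hnlo, hnhi⟩ := abs_lt.mp h1
    have hsum' : (n N : ℝ) + m N + r N = N := by exact_mod_cast hsum N
    have hn1 : 1 ≤ n N := by
      by_contra hcon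
      push_neg at hcon
      have h0 : n N = 0 := by omega
      rw [h0] at hnlo
      rw [Nat.cast_zero, zero_div] at hnlo
      linarith
    have hm1 : 1 ≤ m N := by
      by_contra hcon
      push_neg at hcon
      have h0 : m N = 0 := by omega
      have hm0 : (m N : ℝ) = 0 := by exact_mod_cast h0
      have hdiv : (n N : ℝ) / N + (r N : ℝ) / N = 1 := by
        field_simp
        linarith
      linarith
    intro s hs
    have hsr : s ≤ r N := Nat.lt_succ_iff.mp (Finset.mem_range.mp hs)
    simp only [hL]
    set A := n N + s with hAdef
    set B := m N + r N - s with hBdef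
    have hA1 : 1 ≤ A := le_trans hn1 (Nat.le_add_right _ _)
    have hB1 : 1 ≤ B := by omega
    have hABn : A + B = N := by
      have := hsum N
      omega
    have hABN : (A : ℝ) + B = N := by exact_mod_cast hABn
    have hAc : (A : ℝ) = (n N : ℝ) + s := by rw [hAdef]; push_cast; ring
    set a := (A : ℝ) / (N : ℝ) with hadef
    have haval : a = (n N : ℝ) / N + (s : ℝ) / N := by rw [hadef, hAc, add_div]
    have hsrR : (s : ℝ) / N ≤ (r N : ℝ) / N := by
      exact (div_le_div_iff_of_pos_right hN0).mpr (Nat.cast_le.mpr hsr)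
    have ha_range : |a - p₀| ≤ ρ := by
      rw [abs_le]
      constructor
      · rw [haval]
        have hs0 : (0:ℝ) ≤ (s : ℝ) / N := by positivity
        linarith
      · rw [haval]
        linarith
    have habs := abs_le.mp ha_range
    have hapL : pL ≤ a := by linarith [habs.1]
    have hapU : a ≤ pU := by linarith [habs.2]
    -- translate the log bound into a likelihood-ratio bound
    have hXY : ∀ x y : ℝ, (x = pL ∨ x = pU) → (y = p₀ - δ ∨ y = p₀ + δ) →
        x ^ A * (1 - x) ^ B ≤ Real.exp (-c * N) * (y ^ A * (1 - y) ^ B) := by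
      intro x y hx hy
      have hx0 : 0 < x := by rcases hx with h | h <;> rw [h] <;> linarith
      have hx1 : x < 1 := by rcases hx with h | h <;> rw [h] <;> linarith
      have hy0 : 0 < y := by rcases hy with h | h <;> rw [h] <;> linarith
      have hy1 : y < 1 := by rcases hy with h | h <;> rw [h] <;> linarith
      have hFa := hF a x y ha_range hx hy
      have hAa : (A : ℝ) = a * N := by rw [hadef]; field_simp
      have hBa : (B : ℝ) = (1 - a) * N := by
        have hB' : (B : ℝ) = N - A := by linarith
        rw [hB', hAa]; ring
      have hlog : (A : ℝ) * Real.log x + B * Real.log (1 - x) ≤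
          (A : ℝ) * Real.log y + B * Real.log (1 - y) - c * N := by
        have hmul := mul_le_mul_of_nonneg_right hFa (le_of_lt hN0)
        rw [hAa, hBa]
        calc (a * (N:ℝ)) * Real.log x + ((1 - a) * (N:ℝ)) * Real.log (1 - x)
            = (a * Real.log x + (1 - a) * Real.log (1 - x)) * N := by ring
          _ ≤ (a * Real.log y + (1 - a) * Real.log (1 - y) - c) * N := hmul
          _ = (a * (N:ℝ)) * Real.log y + ((1 - a) * (N:ℝ)) * Real.log (1 - y) - c * N := by
              ring
      rw [pow_eq_exp A B hx0 hx1, pow_eq_exp A B hy0 hy1, ← Real.exp_add]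
      apply Real.exp_le_exp.mpr
      linarith
    exact per_s π₀ A B (N : ℝ) hpL (by linarith : pL < p₀ - δ) (by linarith)
      (by linarith) hpU hN0 hABN hadef hapL hapU hA1 hB1 (Real.exp_pos _) hc₀ hXY
  refine tendsto_of_tendsto_of_tendsto_of_le_of_le' h_lb tendsto_const_nhds ?_ ?_
  · filter_upwards [hmain] with N hm
    exact Finset.le_inf' _ _ (fun s hs => (hm s hs).1)
  · filter_upwards [hmain] with N hm
    exact le_trans
      (Finset.inf'_le _ (Finset.mem_range.mpr (Nat.succ_pos _)))
      ((hm 0 (Finset.mem_range.mpr (Nat.succ_pos _))).2)
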